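/- arXiv:1203.4270 — 6 statements merged into one kernel-verified Lean document; each statement's English description precedes it below -/
import Mathlib

section
/- If K is a non-separable compact Hausdorff space and μ is a strictly positive Borel probability measure on K (i.e., μ gives positive measure to every nonempty open set), then μ is not in the sequential closure of the finitely supported probability measures on K. -/
open MeasureTheory Filter Set

/-- The sequential closure hierarchy over the finitely supported probability
measures on points of `A`, in the weak* topology on probability measures. -/
noncomputable def SeqClos {K : Type*} [TopologicalSpace K] [MeasurableSpace K]
    [OpensMeasurableSpace K] (A : Set K) : Ordinal.{0} → Set (ProbabilityMeasure K)
  | α =>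
    if α = 0 then
      {μ | ∃ s : Finset K, ↑s ⊆ A ∧ μ (↑s : Set K) = 1}
    else
      {μ | ∃ f : ℕ → ProbabilityMeasure K,
        (∀ n, ∃ β : Ordinal.{0}, ∃ _ : β < α, f n ∈ SeqClos A β) ∧
          Tendsto f atTop (nhds μ)}
  termination_by α => α

open scoped NNReal ENNReal BoundedContinuousFunction

/-- Every measure in the sequential closure hierarchy kills nonnegative bounded continuous
functions vanishing on the closure of some countable set. -/
lemma seqClos_countable_support {K : Type*} [TopologicalSpace K] [MeasurableSpace K]
    [BorelSpace K] [T1Space K] (α : Ordinal.{0}) (μ : ProbabilityMeasure K)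
    (hμ : μ ∈ SeqClos (univ : Set K) α) :
    ∃ D : Set K, D.Countable ∧ ∀ f : K →ᵇ ℝ≥0,
      (∀ x ∈ closure D, f x = 0) → ∫⁻ x, f x ∂(μ : Measure K) = 0 := by
  induction α using Ordinal.induction generalizing μ with
  | h α ih =>
    rw [SeqClos] at hμ
    split_ifs at hμ with h0
    · obtain ⟨s, -, hs⟩ := hμ
      refine ⟨(↑s : Set K), s.countable_toSet, fun f hf ↦ ?_⟩
      have hmeas : (μ : Measure K) ((↑s : Set K)ᶜ) = 0 := by
        have h1 : (μ : Measure K) (↑s : Set K) = 1 := by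
          have := congrArg (fun x : ℝ≥0 ↦ (x : ℝ≥0∞)) hs
          simpa using this
        have := measure_compl (μ := (μ : Measure K)) (s.finite_toSet.measurableSet)
          (measure_ne_top _ _)
        rw [this, h1]
        simp
      rw [lintegral_eq_zero_iff (by
        exact (ENNReal.continuous_coe.comp f.continuous).measurable)]
      refine measure_mono_null (fun x hx ↦ ?_) hmeas
      simp only [Set.mem_compl_iff]
      intro hxs
      exact hx (by simp [hf x (subset_closure hxs)])
    · obtain ⟨g, hg, hlim⟩ := hμ
      choose β hβ hmem using hg
      choose D hDc hD using fun n ↦ ih (β n) (hβ n) (g n) (hmem n)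
      refine ⟨⋃ n, D n, countable_iUnion hDc, fun f hf ↦ ?_⟩
      have hzero : ∀ n, ∫⁻ x, f x ∂((g n : Measure K)) = 0 := by
        intro n
        exact hD n f fun x hx ↦ hf x (closure_mono (Set.subset_iUnion D n) hx)
      have := (MeasureTheory.ProbabilityMeasure.tendsto_iff_forall_lintegral_tendsto.mp
        hlim) f
      rw [show (fun i ↦ ∫⁻ ω, f ω ∂((g i : Measure K))) = fun _ ↦ 0 from funext hzero] at this
      exact (tendsto_nhds_unique tendsto_const_nhds this).symm

theorem stmt1 {K : Type*} [TopologicalSpace K] [MeasurableSpace K] [BorelSpace K]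
    [CompactSpace K] [T2Space K]
    (hK : ¬ TopologicalSpace.SeparableSpace K)
    (μ : ProbabilityMeasure K)
    (hpos : ∀ U : Set K, IsOpen U → U.Nonempty → 0 < μ U) :
    μ ∉ SeqClos (univ : Set K) (Cardinal.aleph 1).ord := by
  intro hμ
  obtain ⟨D, hDc, hD⟩ := seqClos_countable_support _ μ hμ
  -- It suffices to show `closure D = univ`, contradicting non-separability.
  by_cases hcl : closure D = univ
  · exact hK ⟨⟨D, hDc, by rw [dense_iff_closure_eq, hcl]⟩⟩
  · obtain ⟨x₀, hx₀⟩ : ∃ x, x ∉ closure D := by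
      by_contra h
      push_neg at h
      exact hcl (eq_univ_of_forall h)
    -- Urysohn: f = 0 on closure D, f = 1 at x₀
    obtain ⟨f, hf0, hf1, hficc⟩ := exists_continuous_zero_one_of_isClosed
      isClosed_closure (isClosed_singleton (x := x₀))
      (Set.disjoint_singleton_right.mpr hx₀)
    set g : K →ᵇ ℝ≥0 := BoundedContinuousFunction.mkOfCompact
      ⟨fun x ↦ (f x).toNNReal, continuous_real_toNNReal.comp f.continuous⟩ with hg
    have hgx₀ : g x₀ = 1 := by
      simp [hg, BoundedContinuousFunction.mkOfCompact_apply, ContinuousMap.coe_mk,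
        hf1 (Set.mem_singleton x₀)]
    have hint : ∫⁻ x, g x ∂(μ : Measure K) = 0 := by
      refine hD g fun x hx ↦ ?_
      simp [hg, BoundedContinuousFunction.mkOfCompact_apply, ContinuousMap.coe_mk, hf0 hx]
    have hnull : (μ : Measure K) {x | g x ≠ 0} = 0 := by
      have := (lintegral_eq_zero_iff
        ((ENNReal.continuous_coe.comp g.continuous).measurable)).mp hint
      rw [Filter.EventuallyEq, ae_iff] at this
      refine measure_mono_null (fun x hx ↦ ?_) this
      simp only [Set.mem_setOf_eq] at hx
      simp only [Set.mem_setOf_eq, Function.comp_apply, Pi.zero_apply, ENNReal.coe_eq_zero]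
      exact hx
    have hUopen : IsOpen {x | g x ≠ 0} := by
      have : {x | g x ≠ 0} = g ⁻¹' ({0}ᶜ) := rfl
      rw [this]
      exact (isClosed_singleton.preimage g.continuous).isOpen_compl
    have hUne : ({x | g x ≠ 0} : Set K).Nonempty := ⟨x₀, by simp [hgx₀]⟩
    have := hpos _ hUopen hUne
    rw [← ProbabilityMeasure.ennreal_coeFn_eq_coeFn_toMeasure] at hnull
    simp only [ENNReal.coe_eq_zero] at hnull
    rw [hnull] at this
    exact lt_irrefl 0 this
end

section
/- Let K be a compact Hausdorff space such that C(K) is a Grothendieck space. If a sequence (μ_n) of finitely supported probability measures on K converges weak* to a probability measure μ, then μ is purely atomic; in fact μ = Σ_n a_n δ_{x_n} where {x_n : n ∈ ω} = ⋃_n supp(μ_n). -/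
open MeasureTheory Filter Set
open scoped ENNReal NNReal

theorem stmt2 {K : Type*} [TopologicalSpace K] [MeasurableSpace K] [BorelSpace K]
    [CompactSpace K] [T2Space K]
    -- `C(K)` is a Grothendieck space: weak* convergent sequences of probability
    -- measures converge on every bounded Borel function
    (hGro : ∀ (ν : ℕ → ProbabilityMeasure K) (ρ : ProbabilityMeasure K),
      Tendsto ν atTop (nhds ρ) → ∀ f : K → ℝ, Measurable f → (∃ C, ∀ x, |f x| ≤ C) →
        Tendsto (fun n => ∫ x, f x ∂(ν n : Measure K)) atTop
          (nhds (∫ x, f x ∂(ρ : Measure K))))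
    (μn : ℕ → ProbabilityMeasure K) (s : ℕ → Finset K)
    (hsupp : ∀ n, μn n (↑(s n) : Set K) = 1)
    (hpos : ∀ n, ∀ y ∈ s n, 0 < μn n {y})
    (μ : ProbabilityMeasure K)
    (hconv : Tendsto μn atTop (nhds μ)) :
    ∃ (x : ℕ → K) (a : ℕ → ℝ≥0∞),
      Set.range x = ⋃ n, ((s n : Set K)) ∧
      (μ : Measure K) = Measure.sum (fun n => a n • Measure.dirac (x n)) := by
  
  classical
  set A : Set K := ⋃ n, ((s n : Set K)) with hA
  have hAc : A.Countable := Set.countable_iUnion fun n => (s n).countable_toSet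
  have hAne : A.Nonempty := by
    have h0 := hsupp 0
    rcases (s 0 : Set K).eq_empty_or_nonempty with h | h
    · rw [h] at h0
      have h0' : ((μn 0 : Measure K) (∅ : Set K)) = 1 := by
        rw [← ProbabilityMeasure.ennreal_coeFn_eq_coeFn_toMeasure, h0]; simp
      simp at h0'
    · exact h.mono (Set.subset_iUnion (fun n => ((s n : Set K))) 0)
  obtain ⟨x, hx⟩ := hAc.exists_eq_range hAne
  have hAm : MeasurableSet A := hAc.measurableSet
  have hμnA : ∀ n, (μn n : Measure K) A = 1 := by
    intro n
    have h1 : (μn n : Measure K) (↑(s n)) = 1 := by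
      have h := hsupp n
      rw [← ProbabilityMeasure.ennreal_coeFn_eq_coeFn_toMeasure, h]; simp
    refine le_antisymm prob_le_one ?_
    calc (1:ℝ≥0∞) = (μn n : Measure K) (↑(s n)) := h1.symm
      _ ≤ (μn n : Measure K) A := measure_mono (Set.subset_iUnion (fun n => ((s n : Set K))) n)
  have hμA : (μ : Measure K) A = 1 := by
    have hbd : ∃ C, ∀ y, |A.indicator (1 : K → ℝ) y| ≤ C := by
      refine ⟨1, fun y => ?_⟩
      by_cases hy : y ∈ A <;> simp [Set.indicator_apply, hy]
    have hmeas : Measurable (A.indicator (1 : K → ℝ)) :=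
      measurable_const.indicator hAm
    have htend := hGro μn μ hconv _ hmeas hbd
    have heq : ∀ n, ∫ y, A.indicator (1 : K → ℝ) y ∂(μn n : Measure K) = 1 := by
      intro n
      rw [MeasureTheory.integral_indicator_one hAm, measureReal_def, hμnA n]; simp
    have hlim : Tendsto (fun n => ∫ y, A.indicator (1 : K → ℝ) y ∂(μn n : Measure K))
        atTop (nhds 1) := by
      simp only [heq]; exact tendsto_const_nhds
    have huniq := tendsto_nhds_unique htend hlim
    rw [MeasureTheory.integral_indicator_one hAm] at huniq
    exact (ENNReal.toReal_eq_one_iff _).mp huniq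
  set B : ℕ → Set K := disjointed (fun n => ({x n} : Set K)) with hB
  have hBm : ∀ n, MeasurableSet (B n) :=
    MeasurableSet.disjointed fun n => measurableSet_singleton _
  have hBdisj : Pairwise (Function.onFun Disjoint B) := disjoint_disjointed _
  have hBU : ⋃ n, B n = Set.range x := by
    rw [hB, iUnion_disjointed]
    ext y; simp [eq_comm]
  refine ⟨x, fun n => (μ : Measure K) (B n), hx.symm, ?_⟩
  have key : ∀ n, (μ : Measure K).restrict (B n)
      = (μ : Measure K) (B n) • Measure.dirac (x n) := by
    intro n
    have hsub : B n ⊆ {x n} := disjointed_subset _ _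
    ext E hE
    rw [Measure.restrict_apply hE, Measure.smul_apply, Measure.dirac_apply' _ hE, smul_eq_mul]
    by_cases hxE : x n ∈ E
    · have hEB : E ∩ B n = B n := Set.inter_eq_self_of_subset_right
        (hsub.trans (Set.singleton_subset_iff.mpr hxE))
      simp [hEB, Set.indicator_of_mem hxE]
    · have hemp : E ∩ B n = ∅ := by
        apply Set.eq_empty_iff_forall_notMem.mpr
        rintro y ⟨hyE, hyB⟩
        have hyx : y = x n := hsub hyB
        exact hxE (hyx ▸ hyE)
      simp [hemp, Set.indicator_of_notMem hxE]
  have hAae : A =ᵐ[(μ : Measure K)] Set.univ := by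
    refine ae_eq_univ.mpr ?_
    have hc := measure_compl (μ := (μ : Measure K)) hAm (measure_ne_top _ _)
    rw [hμA, measure_univ] at hc
    simpa using hc
  calc (μ : Measure K) = (μ : Measure K).restrict Set.univ := (Measure.restrict_univ).symm
    _ = (μ : Measure K).restrict A := (Measure.restrict_congr_set hAae).symm
    _ = (μ : Measure K).restrict (⋃ n, B n) := by rw [hBU, ← hx]
    _ = Measure.sum (fun n => (μ : Measure K).restrict (B n)) :=
        Measure.restrict_iUnion hBdisj hBm
    _ = Measure.sum (fun n => (μ : Measure K) (B n) • Measure.dirac (x n)) := by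
        congr 1; funext n; exact key n
end

section
/- Let K be the Stone space of the algebra generated by the density-zero ideal 𝒵 and a lifting of the measure algebra into the density sets, carrying the density measure μ. Then μ is orthogonal to every finitely supported probability measure on K; more generally, if every ultrafilter in K contains sets of arbitrarily small μ-measure, then μ is orthogonal to every finitely supported measure. -/
open Filter Set
open scoped Classical

/-- An ultrafilter on a Boolean algebra, as a subset. -/
def IsUltra {B : Type*} [BooleanAlgebra B] (u : Set B) : Prop :=
  ⊤ ∈ u ∧ ⊥ ∉ u ∧ (∀ a b : B, a ∈ u → b ∈ u → a ⊓ b ∈ u) ∧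
    (∀ a b : B, a ∈ u → a ≤ b → b ∈ u) ∧ (∀ a : B, a ∈ u ∨ aᶜ ∈ u)

/-- If every ultrafilter on `𝔹` contains elements of arbitrarily small `μ`-measure,
then `μ` is orthogonal to every finitely supported measure on the Stone space of `𝔹`,
i.e. to every finite convex combination of Dirac measures at ultrafilters: for every
`δ > 0` there is `F ∈ 𝔹` whose `ν`-measure exceeds `1 - δ` while `μ F < δ`. -/
theorem stmt7 {B : Type*} [BooleanAlgebra B] (μ : B → ℝ)
    (hμ1 : μ ⊤ = 1) (hμ0 : ∀ a : B, 0 ≤ μ a)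
    (hμadd : ∀ a b : B, Disjoint a b → μ (a ⊔ b) = μ a + μ b)
    (hsmall : ∀ u : Set B, IsUltra u → ∀ ε : ℝ, 0 < ε → ∃ A ∈ u, μ A < ε) :
    ∀ (m : ℕ) (w : ℕ → ℝ) (U : ℕ → Set B),
      (∀ i < m, IsUltra (U i)) → (∀ i < m, 0 ≤ w i) →
      (∑ i ∈ Finset.range m, w i) = 1 →
      ∀ δ : ℝ, 0 < δ →
        ∃ F : B, (∑ i ∈ Finset.range m, w i * (if F ∈ U i then (1 : ℝ) else 0)) > 1 - δ
          ∧ μ F < δ := by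
  -- monotonicity and subadditivity of μ
  have hmono : ∀ a b : B, a ≤ b → μ a ≤ μ b := by
    intro a b hab
    have h := hμadd a (b \ a) disjoint_sdiff_self_right
    rw [sup_sdiff_cancel' le_rfl hab] at h
    linarith [hμ0 (b \ a)]
  have hsub : ∀ a b : B, μ (a ⊔ b) ≤ μ a + μ b := by
    intro a b
    have h := hμadd a (b \ a) disjoint_sdiff_self_right
    have : a ⊔ b \ a = a ⊔ b := sup_sdiff_self_right a b
    rw [this] at h
    have := hmono (b \ a) b sdiff_le
    linarith
  intro m w U hU hw hsum δ hδ
  rcases Nat.eq_zero_or_pos m with hm0 | hm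
  · subst hm0; simp at hsum
  -- choose small sets in each ultrafilter
  have hε : (0 : ℝ) < δ / m := div_pos hδ (by exact_mod_cast hm)
  choose A hA hAμ using fun i (hi : i < m) => hsmall (U i) (hU i hi) (δ / m) hε
  set F : B := (Finset.range m).sup fun i => if h : i < m then A i h else ⊥ with hF
  refine ⟨F, ?_, ?_⟩
  · have hmem : ∀ i < m, F ∈ U i := by
      intro i hi
      refine (hU i hi).2.2.2.1 (A i hi) F (hA i hi) ?_
      have : (fun i => if h : i < m then A i h else ⊥) i ≤ F := by
        rw [hF]
        exact Finset.le_sup (f := fun i => if h : i < m then A i h else ⊥)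
          (Finset.mem_range.mpr hi)
      simpa [hi] using this
    have heq : (∑ i ∈ Finset.range m, w i * (if F ∈ U i then (1 : ℝ) else 0))
        = ∑ i ∈ Finset.range m, w i := by
      refine Finset.sum_congr rfl fun i hi => ?_
      simp [hmem i (Finset.mem_range.mp hi)]
    rw [heq, hsum]; linarith
  · have hbot : μ ⊥ = 0 := by
      have h := hμadd ⊥ ⊥ disjoint_bot_left
      simp at h; linarith
    have hgen : ∀ (g : ℕ → B) (s : Finset ℕ), μ (s.sup g) ≤ ∑ i ∈ s, μ (g i) := by
      intro g s
      induction s using Finset.cons_induction with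
      | empty => simp [hbot]
      | cons a s ha ih =>
        rw [Finset.sup_cons, Finset.sum_cons]
        calc μ _ ≤ μ (g a) + μ (s.sup g) := hsub _ _
          _ ≤ _ := by linarith
    have : μ F ≤ ∑ i ∈ Finset.range m, μ (if h : i < m then A i h else ⊥) :=
      hgen _ _
    have hlt : (∑ i ∈ Finset.range m, μ (if h : i < m then A i h else ⊥)) < δ := by
      have : (∑ i ∈ Finset.range m, μ (if h : i < m then A i h else ⊥))
          < ∑ _i ∈ Finset.range m, δ / m := by
        refine Finset.sum_lt_sum_of_nonempty ⟨0, Finset.mem_range.mpr hm⟩ fun i hi => ?_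
        have hi' := Finset.mem_range.mp hi
        simpa [hi'] using hAμ i hi'
      have : (∑ i ∈ Finset.range m, μ (if h : i < m then A i h else ⊥)) < m * (δ / m) := by
        simpa using this
      calc _ < (m : ℝ) * (δ / m) := this
        _ = δ := by field_simp
    linarith
end

section
/- Let K be a zero-dimensional compact Hausdorff space, μ ∈ S_α(K), and f : K → ℝ a nonnegative continuous function with ∫ f dμ = 1. Then the measure ν defined by ν(A) = ∫_A f dμ belongs to S_α(K). -/
open MeasureTheory Filter Set
open scoped ENNReal NNReal Topology

section Aux
variable {K : Type*} [TopologicalSpace K] [MeasurableSpace K] [BorelSpace K]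
    [CompactSpace K] [T2Space K]

lemma aux_integrable (P : Measure K) [IsFiniteMeasure P] {f : K → ℝ} (hf : Continuous f) :
    Integrable f P :=
  (BoundedContinuousFunction.mkOfCompact ⟨f, hf⟩).integrable P

lemma aux_integral_withDensity {P : Measure K} [IsFiniteMeasure P] {f : K → ℝ}
    (hf : Continuous f) (hf0 : ∀ x, 0 ≤ f x) (φ : K → ℝ) :
    ∫ x, φ x ∂(P.withDensity fun x => ENNReal.ofReal (f x)) = ∫ x, f x * φ x ∂P := by
  have hm : Measurable fun x => (f x).toNNReal :=
    (continuous_real_toNNReal.comp hf).measurable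
  rw [show (fun x => ENNReal.ofReal (f x)) = fun x => ((fun x => (f x).toNNReal) x : ℝ≥0∞)
      from rfl,
    integral_withDensity_eq_integral_smul hm]
  congr 1
  ext x
  simp [NNReal.smul_def, Real.coe_toNNReal _ (hf0 x)]

lemma aux_isProb {P : Measure K} [IsProbabilityMeasure P] {f : K → ℝ}
    (hf : Continuous f) (hf0 : ∀ x, 0 ≤ f x) (h1 : ∫ x, f x ∂P = 1) :
    IsProbabilityMeasure (P.withDensity fun x => ENNReal.ofReal (f x)) := by
  constructor
  rw [withDensity_apply _ MeasurableSet.univ, Measure.restrict_univ,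
    ← ofReal_integral_eq_lintegral_ofReal (aux_integrable P hf) (Eventually.of_forall hf0),
    h1, ENNReal.ofReal_one]
end Aux

section Main
variable {K : Type*} [TopologicalSpace K] [MeasurableSpace K] [BorelSpace K]
    [CompactSpace K] [T2Space K]

noncomputable def densProb (P : ProbabilityMeasure K) (f : K → ℝ) (hf : Continuous f)
    (hf0 : ∀ x, 0 ≤ f x) (hc : 0 < ∫ x, f x ∂(P : Measure K)) : ProbabilityMeasure K :=
  ⟨(P : Measure K).withDensity
      (fun x => ENNReal.ofReal (f x / ∫ x, f x ∂(P : Measure K))),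
    aux_isProb (hf.div_const _) (fun x => div_nonneg (hf0 x) hc.le)
      (by rw [integral_div, div_self hc.ne'])⟩

lemma densProb_coe (P : ProbabilityMeasure K) (f : K → ℝ) (hf : Continuous f)
    (hf0 : ∀ x, 0 ≤ f x) (hc : 0 < ∫ x, f x ∂(P : Measure K)) :
    (densProb P f hf hf0 hc : Measure K)
      = (P : Measure K).withDensity
          (fun x => ENNReal.ofReal (f x / ∫ x, f x ∂(P : Measure K))) := rfl

theorem key (α : Ordinal.{0}) :
    ∀ (μ ν : ProbabilityMeasure K), μ ∈ SeqClos (univ : Set K) α →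
    ∀ f : K → ℝ, Continuous f → (∀ x, 0 ≤ f x) →
    ∫ x, f x ∂(μ : Measure K) = 1 →
    (ν : Measure K) = (μ : Measure K).withDensity (fun x => ENNReal.ofReal (f x)) →
    ν ∈ SeqClos (univ : Set K) α := by
  induction α using Ordinal.induction with
  | h α IH =>
  intro μ ν hμ f hf hf0 hint hν
  rw [SeqClos] at hμ ⊢
  by_cases hα : α = 0
  · simp only [hα, if_pos rfl] at hμ ⊢
    obtain ⟨s, -, hs1⟩ := hμ
    refine ⟨s, subset_univ _, ?_⟩
    have hsm : MeasurableSet (↑s : Set K) := s.finite_toSet.isClosed.measurableSet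
    have hμs : (μ : Measure K) (↑s : Set K) = 1 := by
      have h := μ.ennreal_coeFn_eq_coeFn_toMeasure (↑s : Set K)
      rw [hs1] at h
      simpa using h.symm
    have hμc : (μ : Measure K) (↑s : Set K)ᶜ = 0 := (prob_compl_eq_zero_iff hsm).mpr hμs
    have hνc : (ν : Measure K) (↑s : Set K)ᶜ = 0 := by
      rw [hν]; exact withDensity_absolutelyContinuous _ _ hμc
    have hνs : (ν : Measure K) (↑s : Set K) = 1 := (prob_compl_eq_zero_iff hsm).mp hνc
    have h2 : ((ν (↑s : Set K) : ℝ≥0) : ℝ≥0∞) = 1 := by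
      rw [ν.ennreal_coeFn_eq_coeFn_toMeasure, hνs]
    exact_mod_cast h2
  · simp only [if_neg hα] at hμ ⊢
    obtain ⟨g, hg, hgconv⟩ := hμ
    set c : ℕ → ℝ := fun n => ∫ x, f x ∂(g n : Measure K) with hc_def
    have hF : Tendsto c atTop (𝓝 1) := by
      have h := ProbabilityMeasure.tendsto_iff_forall_integral_tendsto.mp hgconv
        (BoundedContinuousFunction.mkOfCompact ⟨f, hf⟩)
      rw [show ∫ x, (BoundedContinuousFunction.mkOfCompact ⟨f, hf⟩) x ∂(μ : Measure K)
        = 1 from hint] at h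
      exact h
    have hev : ∀ᶠ n in atTop, 0 < c n := hF.eventually (eventually_gt_nhds zero_lt_one)
    refine ⟨fun n => if hn : 0 < c n then densProb (g n) f hf hf0 hn else g n, ?_, ?_⟩
    · intro n
      obtain ⟨β, hβ, hmem⟩ := hg n
      refine ⟨β, hβ, ?_⟩
      by_cases hn : 0 < c n
      · simp only [dif_pos hn]
        exact IH β hβ (g n) _ hmem (fun x => f x / c n) (hf.div_const _)
          (fun x => div_nonneg (hf0 x) hn.le) (by rw [integral_div, div_self hn.ne'])
          (densProb_coe _ _ _ _ _)
      · simpa only [dif_neg hn] using hmem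
    · rw [ProbabilityMeasure.tendsto_iff_forall_integral_tendsto]
      intro φ
      have hφf : Tendsto (fun n => ∫ x, f x * φ x ∂(g n : Measure K)) atTop
          (𝓝 (∫ x, f x * φ x ∂(μ : Measure K))) :=
        ProbabilityMeasure.tendsto_iff_forall_integral_tendsto.mp hgconv
          (BoundedContinuousFunction.mkOfCompact ⟨fun x => f x * φ x, hf.mul φ.continuous⟩)
      have hlim : Tendsto (fun n => (c n)⁻¹ * ∫ x, f x * φ x ∂(g n : Measure K)) atTop
          (𝓝 (1⁻¹ * ∫ x, f x * φ x ∂(μ : Measure K))) :=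
        (hF.inv₀ one_ne_zero).mul hφf
      simp only [inv_one, one_mul] at hlim
      have hval : ∫ x, φ x ∂(ν : Measure K) = ∫ x, f x * φ x ∂(μ : Measure K) := by
        rw [hν, aux_integral_withDensity hf hf0]
      rw [hval]
      refine hlim.congr' ?_
      filter_upwards [hev] with n hn
      simp only [dif_pos hn]
      rw [densProb_coe, aux_integral_withDensity (hf.div_const _)
        (fun x => div_nonneg (hf0 x) hn.le), ← integral_const_mul]
      congr 1
      ext x
      ring
end Main

theorem stmt9 {K : Type*} [TopologicalSpace K] [MeasurableSpace K] [BorelSpace K]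
    [CompactSpace K] [T2Space K] [TotallyDisconnectedSpace K]
    (α : Ordinal.{0})
    (μ ν : ProbabilityMeasure K)
    (hμ : μ ∈ SeqClos (univ : Set K) α)
    (f : K → ℝ) (hf : Continuous f) (hf0 : ∀ x, 0 ≤ f x)
    (hint : ∫ x, f x ∂(μ : Measure K) = 1)
    (hν : (ν : Measure K) = (μ : Measure K).withDensity (fun x => ENNReal.ofReal (f x))) :
    ν ∈ SeqClos (univ : Set K) α :=
  key α μ ν hμ f hf hf0 hint hν
end

section
/- Let K be a compact Hausdorff space and (K_α)_{α<ω₁} a family of pairwise disjoint clopen-like summands realized inside the one-point compactification K of the disjoint union ⊔_{α<ω₁} K_α. If for each α there is a probability measure μ_α on K_α with μ_α ∈ S_α(K_α) ∖ ⋃_{β<α} S_β(K_α), then the measures μ'_α on K defined by μ'_α(A) = μ_α(A ∩ K_α) satisfy μ'_α ∈ S_α(K) ∖ ⋃_{β<α} S_β(K) for every α < ω₁. In particular S_α(K) ∖ ⋃_{β<α} S_β(K) ≠ ∅ for every 1 ≤ α < ω₁, so the sequential closure of the finitely supported measures on K is not obtained in any countable number of steps. -/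
open MeasureTheory Filter Set
open scoped ENNReal NNReal

lemma map_mem_seqClos {X Y : Type*} [TopologicalSpace X] [MeasurableSpace X]
    [OpensMeasurableSpace X] [TopologicalSpace Y] [MeasurableSpace Y] [BorelSpace Y]
    [T1Space Y] {f : X → Y} (hf : Continuous f) (β : Ordinal.{0}) :
    ∀ ν ∈ SeqClos (univ : Set X) β,
      ν.map hf.measurable.aemeasurable ∈ SeqClos (univ : Set Y) β := by
  classical
  induction β using Ordinal.induction with
  | _ β IH =>
    intro ν hν
    rw [SeqClos] at hν ⊢
    by_cases hβ : β = 0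
    · rw [if_pos hβ] at hν ⊢
      obtain ⟨s, -, hs⟩ := hν
      refine ⟨s.image f, subset_univ _, ?_⟩
      have h1 : (ν : Measure X) ↑s = 1 := by
        rw [← ProbabilityMeasure.ennreal_coeFn_eq_coeFn_toMeasure, hs]; norm_num
      have hms : MeasurableSet (↑(s.image f) : Set Y) :=
        (Finset.finite_toSet _).isClosed.measurableSet
      have h2 : ((ν.map hf.measurable.aemeasurable) ↑(s.image f) : ℝ≥0∞) = 1 := by
        rw [ProbabilityMeasure.ennreal_coeFn_eq_coeFn_toMeasure,
          ProbabilityMeasure.toMeasure_map, Measure.map_apply hf.measurable hms]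
        refine le_antisymm ?_ ?_
        · exact le_trans (measure_mono (subset_univ _)) (by simp)
        · calc (1:ℝ≥0∞) = (ν : Measure X) ↑s := h1.symm
            _ ≤ _ := by
                refine measure_mono ?_
                intro x hx
                simp only [mem_preimage, Finset.coe_image, mem_image]
                exact ⟨x, hx, rfl⟩
      exact_mod_cast h2
    · rw [if_neg hβ] at hν ⊢
      obtain ⟨g, hg, hten⟩ := hν
      refine ⟨fun n => (g n).map hf.measurable.aemeasurable, fun n => ?_, ?_⟩
      · obtain ⟨β', hβ', hmem⟩ := hg n
        exact ⟨β', hβ', IH β' hβ' _ hmem⟩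
      · exact ((ProbabilityMeasure.continuous_map hf).tendsto ν).comp hten

theorem stmt15
    (Kfam : {o : Ordinal.{0} // o < (Cardinal.aleph 1).ord} → Type)
    [∀ i, TopologicalSpace (Kfam i)] [∀ i, CompactSpace (Kfam i)]
    [∀ i, T2Space (Kfam i)]
    [∀ i, MeasurableSpace (Kfam i)] [∀ i, BorelSpace (Kfam i)]
    [MeasurableSpace (OnePoint (Σ j, Kfam j))] [BorelSpace (OnePoint (Σ j, Kfam j))]
    -- `μ i ∈ S_α(K_α) ∖ ⋃_{β<α} S_β(K_α)` where `α = i.1`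
    (μ : ∀ i, ProbabilityMeasure (Kfam i))
    (hμ : ∀ i, μ i ∈ SeqClos (univ : Set (Kfam i)) i.1 ∧
      ∀ β < i.1, μ i ∉ SeqClos (univ : Set (Kfam i)) β)
    -- `μ' i` is the trivial extension of `μ i` to the one-point compactification
    (μ' : ∀ i, ProbabilityMeasure (OnePoint (Σ j, Kfam j)))
    (hμ' : ∀ i, (μ' i : Measure (OnePoint (Σ j, Kfam j))) =
      Measure.map (fun x => (OnePoint.some ⟨i, x⟩)) (μ i : Measure (Kfam i))) :
    (∀ i : {o : Ordinal.{0} // o < (Cardinal.aleph 1).ord}, μ' i ∈ SeqClos (univ : Set (OnePoint (Σ j, Kfam j))) i.1 ∧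
      ∀ β < i.1, μ' i ∉ SeqClos (univ : Set (OnePoint (Σ j, Kfam j))) β) ∧
    (∀ i : {o : Ordinal.{0} // o < (Cardinal.aleph 1).ord}, (1 : Ordinal.{0}) ≤ i.1 →
      (SeqClos (univ : Set (OnePoint (Σ j, Kfam j))) i.1 \
        {ν | ∃ β < i.1, ν ∈ SeqClos (univ : Set (OnePoint (Σ j, Kfam j))) β}).Nonempty) := by
  classical
  haveI : WeaklyLocallyCompactSpace (Σ j, Kfam j) :=
    ⟨fun x => ⟨range (Sigma.mk x.1), isCompact_range continuous_sigmaMk,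
      (Topology.IsOpenEmbedding.sigmaMk).isOpen_range.mem_nhds ⟨x.2, Sigma.eta x⟩⟩⟩
  have main : ∀ i : {o : Ordinal.{0} // o < (Cardinal.aleph 1).ord},
      μ' i ∈ SeqClos (univ : Set (OnePoint (Σ j, Kfam j))) i.1 ∧
      ∀ β < i.1, μ' i ∉ SeqClos (univ : Set (OnePoint (Σ j, Kfam j))) β := by
    intro i
    haveI : Nonempty (Kfam i) := (μ i).nonempty
    set p : Kfam i := Classical.arbitrary _ with hp
    set e : Kfam i → OnePoint (Σ j, Kfam j) := fun x => OnePoint.some ⟨i, x⟩ with he_def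
    have he : Continuous e := OnePoint.continuous_coe.comp continuous_sigmaMk
    have heo : Topology.IsOpenEmbedding e :=
      OnePoint.isOpenEmbedding_coe.comp Topology.IsOpenEmbedding.sigmaMk
    have hμ'map : μ' i = (μ i).map he.measurable.aemeasurable := by
      apply MeasureTheory.ProbabilityMeasure.toMeasure_injective
      rw [ProbabilityMeasure.toMeasure_map, hμ' i]
    constructor
    · rw [hμ'map]
      exact map_mem_seqClos he i.1 (μ i) (hμ i).1
    · intro β hβ hmem
      set r : OnePoint (Σ j, Kfam j) → Kfam i := fun z => match z with
        | none => p
        | some w => if h : w.1 = i then h ▸ w.2 else p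
        with hr_def
      have hre : ∀ x : Kfam i, r (e x) = x := fun x => by simp [hr_def, he_def]
      have hYclosed : IsClosed (range e) := (isCompact_range he).isClosed
      have hr : Continuous r := by
        rw [continuous_def]
        intro U hU
        have himg : IsOpen (e '' U) := heo.isOpenMap U hU
        have hpre : r ⁻¹' U = e '' U ∪ (if p ∈ U then (range e)ᶜ else ∅) := by
          ext z
          match z with
          | none =>
            have h1 : (none : OnePoint (Σ j, Kfam j)) ∉ e '' U := by
              rintro ⟨x, -, hx⟩; exact Option.some_ne_none _ hx
            have h2 : (none : OnePoint (Σ j, Kfam j)) ∉ range e := by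
              rintro ⟨x, hx⟩; exact Option.some_ne_none _ hx
            change r (none : OnePoint (Σ j, Kfam j)) ∈ U ↔ (none : OnePoint (Σ j, Kfam j)) ∈ _
            by_cases hpU : p ∈ U <;> simp [hr_def, h1, h2, hpU] <;> exact Or.inr h2
          | some w =>
            by_cases h : w.1 = i
            · obtain ⟨j, x⟩ := w
              dsimp at h; subst h
              have h1 : (some ⟨j, x⟩ : OnePoint (Σ j', Kfam j')) ∈ e '' U ↔ x ∈ U := by
                constructor
                · rintro ⟨y, hy, hxy⟩
                  obtain rfl : y = x :=
                    eq_of_heq (Sigma.mk.inj_iff.mp (Option.some_injective _ hxy)).2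
                  exact hy
                · exact fun hx => ⟨x, hx, rfl⟩
              have h2 : (some ⟨j, x⟩ : OnePoint (Σ j', Kfam j')) ∈ range e := ⟨x, rfl⟩
              change r (some ⟨j, x⟩ : OnePoint (Σ j', Kfam j')) ∈ U ↔ (some ⟨j, x⟩ : OnePoint (Σ j', Kfam j')) ∈ _
              by_cases hpU : p ∈ U <;> simp [hr_def, h1, h2, hpU] <;>
                exact ⟨fun hx => Or.inl (h1.2 hx), fun hm => hm.elim h1.1 (fun hc => absurd h2 hc)⟩
            · have h1 : (some w : OnePoint (Σ j', Kfam j')) ∉ range e := by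
                rintro ⟨x, hx⟩
                have := Option.some_injective _ hx
                exact h (congrArg Sigma.fst this.symm)
              have h1' : (some w : OnePoint (Σ j', Kfam j')) ∉ e '' U :=
                fun ⟨x, _, hx⟩ => h1 ⟨x, hx⟩
              change r (some w : OnePoint (Σ j', Kfam j')) ∈ U ↔ (some w : OnePoint (Σ j', Kfam j')) ∈ _
              by_cases hpU : p ∈ U <;> simp [hr_def, h, h1, h1', hpU] <;> exact Or.inr h1
        rw [hpre]
        refine himg.union ?_
        split
        · exact hYclosed.isOpen_compl
        · exact isOpen_empty
      have hmap2 : (μ' i).map hr.measurable.aemeasurable = μ i := by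
        apply MeasureTheory.ProbabilityMeasure.toMeasure_injective
        rw [ProbabilityMeasure.toMeasure_map, hμ' i,
          Measure.map_map hr.measurable he.measurable]
        have hcomp : r ∘ (fun x => (OnePoint.some ⟨i, x⟩ : OnePoint (Σ j, Kfam j))) = id :=
          funext hre
        rw [hcomp, Measure.map_id]
      have := map_mem_seqClos hr β (μ' i) hmem
      rw [hmap2] at this
      exact (hμ i).2 β hβ this
  refine ⟨main, fun i _ => ⟨μ' i, (main i).1, ?_⟩⟩
  rintro ⟨β, hβ, hm⟩
  exact (main i).2 β hβ hm
end

section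
/- Let (𝔹_n) be Boolean subalgebras of 𝒫(ω) with pairwise disjoint infinite supports B_n partitioning ω, each (𝔹_n, μ_n) metrically isomorphic to the Lebesgue measure algebra (𝔐, λ). Let (𝔹, μ) be constructed canonically: 𝔹 is generated by the 'almost full' sets ℱ = {A : A ∩ B_n ∈ 𝔹_n^n for all n and μ'_n(A ∩ B_n) → 1} together with the diagonal copies ℱ' = {⋃_n φ_n(M)^n : M ∈ 𝔐}, and μ(A) = lim_n μ'_n(A ∩ B_n). Then (𝔐, λ) is metrically isomorphic to (𝔹, μ), via the map M ↦ ⋃_n φ_n(M)^n. -/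
open MeasureTheory Filter Set Function
open scoped symmDiff

noncomputable section

/-- The unit interval. -/
abbrev I01 : Type := Set.Icc (0 : ℝ) 1

/-- Lebesgue measure on the unit interval. -/
noncomputable def volI : Measure I01 := (volume : Measure ℝ).comap Subtype.val

/-- `φ` witnesses that the Lebesgue measure algebra `(𝔐, λ)` (Borel subsets of `[0,1]`
modulo Lebesgue-null sets) is metrically isomorphic to `(𝔹, μ)`: the induced map on
Borel sets modulo null sets is a measure-preserving Boolean isomorphism onto
`𝔹` modulo `μ`-null sets. -/
def IsMetricIsoFromLebesgue (𝔹 : Set (Set ℕ)) (μ : Set ℕ → ℝ)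
    (φ : Set I01 → Set ℕ) : Prop :=
  (∀ M : Set I01, MeasurableSet M → φ M ∈ 𝔹) ∧
  -- measure preserving
  (∀ M : Set I01, MeasurableSet M → μ (φ M) = (volI M).toReal) ∧
  -- well defined and injective modulo null sets
  (∀ M N : Set I01, MeasurableSet M → MeasurableSet N →
    (volI (M ∆ N) = 0 ↔ μ (φ M ∆ φ N) = 0)) ∧
  -- Boolean homomorphism modulo null sets
  (∀ M N : Set I01, MeasurableSet M → MeasurableSet N →
    μ (φ (M ∪ N) ∆ (φ M ∪ φ N)) = 0) ∧
  (∀ M N : Set I01, MeasurableSet M → MeasurableSet N →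
    μ (φ (M ∩ N) ∆ (φ M ∩ φ N)) = 0) ∧
  (∀ M : Set I01, MeasurableSet M → μ (φ Mᶜ ∆ (φ M)ᶜ) = 0) ∧
  μ (φ Set.univ ∆ Set.univ) = 0 ∧
  -- surjective modulo null sets
  (∀ C ∈ 𝔹, ∃ M : Set I01, MeasurableSet M ∧ μ (φ M ∆ C) = 0)

theorem stmt19
    -- a partition of `ω` into infinite sets, with increasing enumerations `x n`
    (B : ℕ → Set ℕ) (hBdisj : Pairwise (onFun Disjoint B))
    (hBinf : ∀ n, (B n).Infinite) (hBunion : ⋃ n, B n = univ)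
    (x : ℕ → ℕ → ℕ) (hx : ∀ n, StrictMono (x n) ∧ Set.range (x n) = B n)
    -- subalgebras `𝔹_n` of `𝒫(ω)` carrying measures `μ_n`
    (𝔹n : ℕ → Set (Set ℕ))
    (hnempty : ∀ n, ∅ ∈ 𝔹n n) (hncompl : ∀ n, ∀ A ∈ 𝔹n n, Aᶜ ∈ 𝔹n n)
    (hnunion : ∀ n, ∀ A ∈ 𝔹n n, ∀ C ∈ 𝔹n n, A ∪ C ∈ 𝔹n n)
    (μn : ℕ → Set ℕ → ℝ) (hμn1 : ∀ n, μn n univ = 1) (hμn0 : ∀ n A, 0 ≤ μn n A)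
    (hμnadd : ∀ n, ∀ A ∈ 𝔹n n, ∀ C ∈ 𝔹n n, Disjoint A C →
      μn n (A ∪ C) = μn n A + μn n C)
    -- each `(𝔹_n, μ_n)` is metrically isomorphic to `(𝔐, λ)`, witnessed by `φ_n`
    (φn : ℕ → Set I01 → Set ℕ)
    (hφn : ∀ n, IsMetricIsoFromLebesgue (𝔹n n) (μn n) (φn n))
    -- the canonical construction: the almost full sets `ℱ`
    (ℱ : Set (Set ℕ))
    (hℱ : ℱ = {A : Set ℕ | (∀ n, ∃ C ∈ 𝔹n n, A ∩ B n = x n '' C) ∧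
        Tendsto (fun n => μn n {i | x n i ∈ A ∩ B n}) atTop (nhds 1)})
    -- the diagonal copies `ℱ'`
    (ℱ' : Set (Set ℕ))
    (hℱ' : ℱ' = {S : Set ℕ | ∃ M : Set I01, MeasurableSet M ∧
        S = ⋃ n, x n '' (φn n M)})
    -- `𝔹` is the algebra generated by `ℱ ∪ ℱ'`
    (𝔹 : Set (Set ℕ))
    (h𝔹 : 𝔹 = ⋂₀ {𝔸 : Set (Set ℕ) | ℱ ∪ ℱ' ⊆ 𝔸 ∧ ∅ ∈ 𝔸 ∧ (∀ A ∈ 𝔸, Aᶜ ∈ 𝔸) ∧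
        ∀ A ∈ 𝔸, ∀ C ∈ 𝔸, A ∪ C ∈ 𝔸})
    -- and `μ(A) = lim_n μ'_n(A ∩ B_n)` on `𝔹`
    (μ : Set ℕ → ℝ)
    (hμ : ∀ A ∈ 𝔹, Tendsto (fun n => μn n {i | x n i ∈ A ∩ B n}) atTop (nhds (μ A))) :
    IsMetricIsoFromLebesgue 𝔹 μ (fun M => ⋃ n, x n '' (φn n M)) := by
  classical
  -- basic facts about the enumerations
  have hinj : ∀ n, Injective (x n) := fun n => (hx n).1.injective
  have hmemB : ∀ n i, x n i ∈ B n := fun n i => (hx n).2 ▸ mem_range_self i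
  -- the "trace" of a set on the n-th block, pulled back to ℕ
  set S : Set ℕ → ℕ → Set ℕ := fun A n => {i | x n i ∈ A ∩ B n} with hS_def
  set Φ : Set I01 → Set ℕ := fun M => ⋃ k, x k '' (φn k M) with hΦ_def
  have hμS : ∀ A ∈ 𝔹, Tendsto (fun n => μn n (S A n)) atTop (nhds (μ A)) := by
    intro A hA; exact hμ A hA
  have hSkey : ∀ (n : ℕ) (A C : Set ℕ), A ∩ B n = x n '' C → S A n = C := by
    intro n A C h
    ext i
    simp only [hS_def, mem_setOf_eq, h, (hinj n).mem_set_image]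
  have hS_union : ∀ (A C : Set ℕ) n, S (A ∪ C) n = S A n ∪ S C n := by
    intro A C n; ext i
    simp only [hS_def, mem_setOf_eq, mem_inter_iff, mem_union]
    tauto
  have hS_inter : ∀ (A C : Set ℕ) n, S (A ∩ C) n = S A n ∩ S C n := by
    intro A C n; ext i
    simp only [hS_def, mem_setOf_eq, mem_inter_iff]
    tauto
  have hS_compl : ∀ (A : Set ℕ) n, S Aᶜ n = (S A n)ᶜ := by
    intro A n; ext i
    simp only [hS_def, mem_setOf_eq, mem_inter_iff, mem_compl_iff]
    have := hmemB n i; tauto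
  have hS_symm : ∀ (A C : Set ℕ) n, S (A ∆ C) n = S A n ∆ S C n := by
    intro A C n; ext i
    simp only [hS_def, mem_setOf_eq, mem_inter_iff, Set.mem_symmDiff]
    have := hmemB n i; tauto
  have hS_univ : ∀ n, S univ n = univ := by
    intro n; ext i; simp [hS_def, hmemB n i]
  have hS_empty : ∀ n, S ∅ n = ∅ := by
    intro n; ext i; simp [hS_def]
  have hS_sub : ∀ (A C : Set ℕ), A ⊆ C → ∀ n, S A n ⊆ S C n := by
    intro A C hAC n i hi
    exact ⟨hAC hi.1, hi.2⟩
  -- the trace of the diagonal copy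
  have hφcap : ∀ (M : Set I01) (n : ℕ), Φ M ∩ B n = x n '' (φn n M) := by
    intro M n
    apply Subset.antisymm
    · rintro y ⟨hy1, hy2⟩
      rcases mem_iUnion.1 hy1 with ⟨m, j, hj, rfl⟩
      rcases eq_or_ne m n with rfl | hmn
      · exact ⟨j, hj, rfl⟩
      · exact absurd hy2 (fun h => Set.disjoint_left.mp (hBdisj hmn) (hmemB m j) h)
    · intro y hy
      refine ⟨mem_iUnion.2 ⟨n, hy⟩, ?_⟩
      rcases hy with ⟨j, _, rfl⟩; exact hmemB n j
  have hSφ : ∀ (M : Set I01) (n : ℕ), S (Φ M) n = φn n M :=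
    fun M n => hSkey n _ _ (hφcap M n)
  -- 𝔹 is an algebra containing ℱ and ℱ'
  have h𝔹mem : ∀ (A : Set ℕ),
      (∀ 𝔸 : Set (Set ℕ), (ℱ ∪ ℱ' ⊆ 𝔸 ∧ ∅ ∈ 𝔸 ∧ (∀ A ∈ 𝔸, Aᶜ ∈ 𝔸) ∧
        ∀ A ∈ 𝔸, ∀ C ∈ 𝔸, A ∪ C ∈ 𝔸) → A ∈ 𝔸) → A ∈ 𝔹 := by
    intro A h; rw [h𝔹]; exact fun 𝔸 h𝔸 => h 𝔸 h𝔸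
  have h𝔹mem' : ∀ (A : Set ℕ), A ∈ 𝔹 →
      (∀ 𝔸 : Set (Set ℕ), (ℱ ∪ ℱ' ⊆ 𝔸 ∧ ∅ ∈ 𝔸 ∧ (∀ A ∈ 𝔸, Aᶜ ∈ 𝔸) ∧
        ∀ A ∈ 𝔸, ∀ C ∈ 𝔸, A ∪ C ∈ 𝔸) → A ∈ 𝔸) := by
    intro A hA; rw [h𝔹] at hA; exact fun 𝔸 h𝔸 => hA 𝔸 h𝔸
  have hempty𝔹 : (∅ : Set ℕ) ∈ 𝔹 := h𝔹mem ∅ (fun 𝔸 h => h.2.1)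
  have hcompl𝔹 : ∀ A ∈ 𝔹, Aᶜ ∈ 𝔹 := by
    intro A hA
    exact h𝔹mem _ (fun 𝔸 h𝔸 => h𝔸.2.2.1 A (h𝔹mem' A hA 𝔸 h𝔸))
  have hunion𝔹 : ∀ A ∈ 𝔹, ∀ C ∈ 𝔹, A ∪ C ∈ 𝔹 := by
    intro A hA C hC
    exact h𝔹mem _ (fun 𝔸 h𝔸 => h𝔸.2.2.2 A (h𝔹mem' A hA 𝔸 h𝔸) C (h𝔹mem' C hC 𝔸 h𝔸))
  have hℱ𝔹 : ℱ ⊆ 𝔹 := fun A hA => h𝔹mem A (fun 𝔸 h => h.1 (Or.inl hA))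
  have hℱ'𝔹 : ℱ' ⊆ 𝔹 := fun A hA => h𝔹mem A (fun 𝔸 h => h.1 (Or.inr hA))
  have hφ𝔹 : ∀ (M : Set I01), MeasurableSet M → Φ M ∈ 𝔹 := by
    intro M hM
    exact hℱ'𝔹 (by rw [hℱ']; exact ⟨M, hM, rfl⟩)
  have hinter𝔹 : ∀ A ∈ 𝔹, ∀ C ∈ 𝔹, A ∩ C ∈ 𝔹 := by
    intro A hA C hC
    have h : A ∩ C = (Aᶜ ∪ Cᶜ)ᶜ := by rw [compl_union, compl_compl, compl_compl]
    rw [h]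
    exact hcompl𝔹 _ (hunion𝔹 _ (hcompl𝔹 A hA) _ (hcompl𝔹 C hC))
  have hsymm𝔹 : ∀ A ∈ 𝔹, ∀ C ∈ 𝔹, A ∆ C ∈ 𝔹 := by
    intro A hA C hC
    rw [Set.symmDiff_def, Set.diff_eq, Set.diff_eq]
    exact hunion𝔹 _ (hinter𝔹 A hA _ (hcompl𝔹 C hC)) _ (hinter𝔹 C hC _ (hcompl𝔹 A hA))
  have huniv𝔹 : (univ : Set ℕ) ∈ 𝔹 := by
    rw [← compl_empty]; exact hcompl𝔹 _ hempty𝔹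
  -- traces of elements of 𝔹 lie in 𝔹n n
  have hSmem : ∀ A ∈ 𝔹, ∀ n, S A n ∈ 𝔹n n := by
    have hsub : 𝔹 ⊆ {A : Set ℕ | ∀ n, ∃ C ∈ 𝔹n n, A ∩ B n = x n '' C} := by
      rw [h𝔹]
      apply sInter_subset_of_mem
      refine ⟨?_, ?_, ?_, ?_⟩
      · rintro A (hA | hA)
        · rw [hℱ] at hA; exact hA.1
        · rw [hℱ'] at hA; rcases hA with ⟨M, hM, rfl⟩
          exact fun n => ⟨φn n M, (hφn n).1 M hM, hφcap M n⟩
      · exact fun n => ⟨∅, hnempty n, by simp⟩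
      · rintro A hA n
        rcases hA n with ⟨C, hC, hAC⟩
        refine ⟨Cᶜ, hncompl n C hC, ?_⟩
        have h1 : x n '' Cᶜ = B n \ x n '' C := by
          rw [compl_eq_univ_diff, image_diff (hinj n), image_univ, (hx n).2]
        rw [h1, ← hAC]
        ext y
        simp only [mem_inter_iff, mem_compl_iff, mem_diff]
        tauto
      · rintro A hA C hC n
        rcases hA n with ⟨D, hD, hAD⟩; rcases hC n with ⟨E, hE, hCE⟩
        exact ⟨D ∪ E, hnunion n D hD E hE,
          by rw [union_inter_distrib_right, hAD, hCE, image_union]⟩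
    intro A hA n
    rcases hsub hA n with ⟨C, hC, hAC⟩
    rw [hSkey n A C hAC]; exact hC
  -- finitely additive measure facts at level n
  have hncap : ∀ n, ∀ A ∈ 𝔹n n, ∀ C ∈ 𝔹n n, A ∩ C ∈ 𝔹n n := by
    intro n A hA C hC
    have h : A ∩ C = (Aᶜ ∪ Cᶜ)ᶜ := by rw [compl_union, compl_compl, compl_compl]
    rw [h]
    exact hncompl n _ (hnunion n _ (hncompl n A hA) _ (hncompl n C hC))
  have hnsymm : ∀ n, ∀ A ∈ 𝔹n n, ∀ C ∈ 𝔹n n, A ∆ C ∈ 𝔹n n := by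
    intro n A hA C hC
    rw [Set.symmDiff_def, Set.diff_eq, Set.diff_eq]
    exact hnunion n _ (hncap n A hA _ (hncompl n C hC)) _ (hncap n C hC _ (hncompl n A hA))
  have hnmono : ∀ n, ∀ A ∈ 𝔹n n, ∀ C ∈ 𝔹n n, A ⊆ C → μn n A ≤ μn n C := by
    intro n A hA C hC hAC
    have hC' : C = A ∪ (C ∩ Aᶜ) := by
      ext y
      simp only [mem_union, mem_inter_iff, mem_compl_iff]
      have := @hAC y; tauto
    have hd : Disjoint A (C ∩ Aᶜ) := by
      rw [Set.disjoint_left]; rintro y hy ⟨_, hy2⟩; exact hy2 hy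
    have heq := hμnadd n A hA (C ∩ Aᶜ) (hncap n C hC _ (hncompl n A hA)) hd
    rw [← hC'] at heq
    have := hμn0 n (C ∩ Aᶜ)
    linarith
  have hnsub : ∀ n, ∀ A ∈ 𝔹n n, ∀ C ∈ 𝔹n n, μn n (A ∪ C) ≤ μn n A + μn n C := by
    intro n A hA C hC
    have h1 : A ∪ C = A ∪ (C ∩ Aᶜ) := by
      ext y
      simp only [mem_union, mem_inter_iff, mem_compl_iff]
      tauto
    have hd : Disjoint A (C ∩ Aᶜ) := by
      rw [Set.disjoint_left]; rintro y hy ⟨_, hy2⟩; exact hy2 hy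
    have hmem : C ∩ Aᶜ ∈ 𝔹n n := hncap n C hC _ (hncompl n A hA)
    have heq := hμnadd n A hA (C ∩ Aᶜ) hmem hd
    rw [← h1] at heq
    have := hnmono n (C ∩ Aᶜ) hmem C hC inter_subset_left
    linarith
  have hn0 : ∀ n, μn n (∅ : Set ℕ) = 0 := by
    intro n
    have h := hμnadd n ∅ (hnempty n) ∅ (hnempty n) (by simp)
    simp only [union_empty] at h
    linarith
  have hncomplval : ∀ n, ∀ A ∈ 𝔹n n, μn n Aᶜ = 1 - μn n A := by
    intro n A hA
    have h := hμnadd n A hA Aᶜ (hncompl n A hA) disjoint_compl_right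
    rw [union_compl_self, hμn1 n] at h
    linarith
  have hnz : ∀ n, ∀ D ∈ 𝔹n n, ∀ E ∈ 𝔹n n, D ⊆ E → μn n E = 0 → μn n D = 0 := by
    intro n D hD E hE hDE hE0
    have := hnmono n D hD E hE hDE
    have := hμn0 n D
    linarith
  have hnEq : ∀ n, ∀ D ∈ 𝔹n n, ∀ E ∈ 𝔹n n, μn n (D ∆ E) = 0 → μn n D = μn n E := by
    intro n D hD E hE h0
    have hsd : D ∆ E ∈ 𝔹n n := hnsymm n D hD E hE
    have h1 : D ⊆ E ∪ (D ∆ E) := by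
      intro y hy
      by_cases h : y ∈ E
      · exact Or.inl h
      · exact Or.inr (Set.mem_symmDiff.2 (Or.inl ⟨hy, h⟩))
    have h2 : E ⊆ D ∪ (D ∆ E) := by
      intro y hy
      by_cases h : y ∈ D
      · exact Or.inl h
      · exact Or.inr (Set.mem_symmDiff.2 (Or.inr ⟨hy, h⟩))
    have m1 := hnmono n D hD _ (hnunion n E hE _ hsd) h1
    have s1 := hnsub n E hE _ hsd
    have m2 := hnmono n E hE _ (hnunion n D hD _ hsd) h2
    have s2 := hnsub n D hD _ hsd
    linarith
  have hntri : ∀ n, ∀ D ∈ 𝔹n n, ∀ E ∈ 𝔹n n, ∀ F ∈ 𝔹n n,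
      μn n (D ∆ F) ≤ μn n (D ∆ E) + μn n (E ∆ F) := by
    intro n D hD E hE F hF
    have htr : D ∆ F ⊆ (D ∆ E) ∪ (E ∆ F) := symmDiff_triangle D E F
    have m1 := hnmono n _ (hnsymm n D hD F hF) _
      (hnunion n _ (hnsymm n D hD E hE) _ (hnsymm n E hE F hF)) htr
    have s1 := hnsub n _ (hnsymm n D hD E hE) _ (hnsymm n E hE F hF)
    linarith
  -- symmetric-difference inclusions
  have hincL : ∀ (c s t : Set ℕ), (c ∩ s) ∆ (c ∩ t) ⊆ s ∆ t := by
    intro c s t y hy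
    simp only [Set.mem_symmDiff, mem_inter_iff] at hy ⊢
    tauto
  have hincR : ∀ (s t c : Set ℕ), (s ∩ c) ∆ (t ∩ c) ⊆ s ∆ t := by
    intro s t c y hy
    simp only [Set.mem_symmDiff, mem_inter_iff] at hy ⊢
    tauto
  have hincU : ∀ (a b c d : Set ℕ), (a ∪ b) ∆ (c ∪ d) ⊆ (a ∆ c) ∪ (b ∆ d) := by
    intro a b c d y hy
    simp only [Set.mem_symmDiff, mem_union] at hy ⊢
    tauto
  -- key computation: μn of the symmetric difference of images
  have hsdset : ∀ (s t : Set ℕ), s ∆ t = (s ∪ t) ∩ (s ∩ t)ᶜ := by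
    intro s t; ext y
    simp only [Set.mem_symmDiff, mem_inter_iff, mem_union, mem_compl_iff]
    tauto
  have hsdsetI : ∀ (s t : Set I01), s ∆ t = (s ∪ t) ∩ (s ∩ t)ᶜ := by
    intro s t; ext y
    simp only [Set.mem_symmDiff, mem_inter_iff, mem_union, mem_compl_iff]
    tauto
  have hmsd : ∀ (M N : Set I01), MeasurableSet M → MeasurableSet N →
      MeasurableSet (M ∆ N) := by
    intro M N hM hN
    rw [Set.symmDiff_def]
    exact (hM.diff hN).union (hN.diff hM)
  have hφnΔ : ∀ n (M N : Set I01), MeasurableSet M → MeasurableSet N →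
      μn n (φn n M ∆ φn n N) = (volI (M ∆ N)).toReal := by
    intro n M N hM hN
    obtain ⟨hb1, hb2, hb3, hb4, hb5, hb6, hb7, hb8⟩ := hφn n
    have hU : MeasurableSet (M ∪ N) := hM.union hN
    have hK : MeasurableSet (M ∩ N) := hM.inter hN
    have hKc : MeasurableSet (M ∩ N)ᶜ := hK.compl
    have hMN : MeasurableSet (M ∆ N) := hmsd M N hM hN
    -- memberships
    have ma : φn n M ∈ 𝔹n n := hb1 M hM
    have mb : φn n N ∈ 𝔹n n := hb1 N hN
    have mU : φn n (M ∪ N) ∈ 𝔹n n := hb1 _ hU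
    have mK : φn n (M ∩ N) ∈ 𝔹n n := hb1 _ hK
    have mKc : φn n (M ∩ N)ᶜ ∈ 𝔹n n := hb1 _ hKc
    have mMN : φn n (M ∆ N) ∈ 𝔹n n := hb1 _ hMN
    have mab : φn n M ∪ φn n N ∈ 𝔹n n := hnunion n _ ma _ mb
    have mabi : φn n M ∩ φn n N ∈ 𝔹n n := hncap n _ ma _ mb
    have mKcc : (φn n (M ∩ N))ᶜ ∈ 𝔹n n := hncompl n _ mK
    have mX1 : φn n (M ∪ N) ∩ φn n (M ∩ N)ᶜ ∈ 𝔹n n := hncap n _ mU _ mKc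
    have mX2 : φn n (M ∪ N) ∩ (φn n (M ∩ N))ᶜ ∈ 𝔹n n := hncap n _ mU _ mKcc
    have mX3 : (φn n M ∪ φn n N) ∩ (φn n (M ∩ N))ᶜ ∈ 𝔹n n := hncap n _ mab _ mKcc
    have mX4 : φn n M ∆ φn n N ∈ 𝔹n n := hnsymm n _ ma _ mb
    -- the four small steps
    have t1 : μn n (φn n (M ∆ N) ∆ (φn n (M ∪ N) ∩ φn n (M ∩ N)ᶜ)) = 0 := by
      have := hb5 (M ∪ N) (M ∩ N)ᶜ hU hKc
      rwa [← hsdsetI M N] at this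
    have t2 : μn n ((φn n (M ∪ N) ∩ φn n (M ∩ N)ᶜ) ∆
        (φn n (M ∪ N) ∩ (φn n (M ∩ N))ᶜ)) = 0 := by
      refine hnz n _ (hnsymm n _ mX1 _ mX2) _
        (hnsymm n _ mKc _ mKcc) (hincL _ _ _) (hb6 (M ∩ N) hK)
    have t3 : μn n ((φn n (M ∪ N) ∩ (φn n (M ∩ N))ᶜ) ∆
        ((φn n M ∪ φn n N) ∩ (φn n (M ∩ N))ᶜ)) = 0 := by
      refine hnz n _ (hnsymm n _ mX2 _ mX3) _
        (hnsymm n _ mU _ mab) (hincR _ _ _) (hb4 M N hM hN)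
    have t4 : μn n (((φn n M ∪ φn n N) ∩ (φn n (M ∩ N))ᶜ) ∆ (φn n M ∆ φn n N)) = 0 := by
      have heq : φn n M ∆ φn n N = (φn n M ∪ φn n N) ∩ (φn n M ∩ φn n N)ᶜ :=
        hsdset _ _
      rw [heq]
      refine hnz n _ (hnsymm n _ mX3 _ (hncap n _ mab _ (hncompl n _ mabi))) _
        (hnsymm n _ mKcc _ (hncompl n _ mabi)) (hincL _ _ _) ?_
      rw [compl_symmDiff_compl]
      exact hb5 M N hM hN
    -- combine by the triangle inequality
    have htot : μn n (φn n (M ∆ N) ∆ (φn n M ∆ φn n N)) = 0 := by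
      have g1 := hntri n _ mMN _ mX2 _ mX4
      have g2 := hntri n _ mMN _ mX1 _ mX2
      have g3 := hntri n _ mX2 _ mX3 _ mX4
      have nn := hμn0 n (φn n (M ∆ N) ∆ (φn n M ∆ φn n N))
      -- μn (MN ∆ X4) ≤ μn (MN ∆ X2) + μn (X2 ∆ X4)
      --            ≤ (μn (MN ∆ X1) + μn (X1 ∆ X2)) + (μn (X2 ∆ X3) + μn (X3 ∆ X4))
      linarith
    have := hnEq n _ mMN _ mX4 htot
    rw [← this]
    exact hb2 (M ∆ N) hMN
  -- limit facts about μ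
  have hμconst : ∀ A ∈ 𝔹, ∀ c : ℝ, (∀ n, μn n (S A n) = c) → μ A = c := by
    intro A hA c hc
    refine tendsto_nhds_unique (hμS A hA) ?_
    have h : (fun n => μn n (S A n)) = fun _ => c := funext fun n => hc n
    rw [h]
    exact tendsto_const_nhds
  have hμnull : ∀ A ∈ 𝔹, (∀ n, μn n (S A n) = 0) → μ A = 0 :=
    fun A hA h => hμconst A hA 0 h
  have hμ0 : ∀ A ∈ 𝔹, 0 ≤ μ A :=
    fun A hA => ge_of_tendsto' (hμS A hA) (fun n => hμn0 n _)
  have hμmono : ∀ A ∈ 𝔹, ∀ C ∈ 𝔹, A ⊆ C → μ A ≤ μ C := by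
    intro A hA C hC hAC
    exact le_of_tendsto_of_tendsto' (hμS A hA) (hμS C hC)
      (fun n => hnmono n _ (hSmem A hA n) _ (hSmem C hC n) (hS_sub A C hAC n))
  have hμsub : ∀ A ∈ 𝔹, ∀ C ∈ 𝔹, μ (A ∪ C) ≤ μ A + μ C := by
    intro A hA C hC
    refine le_of_tendsto_of_tendsto' (hμS _ (hunion𝔹 A hA C hC))
      ((hμS A hA).add (hμS C hC)) (fun n => ?_)
    rw [hS_union]
    exact hnsub n _ (hSmem A hA n) _ (hSmem C hC n)
  have hμtri : ∀ A ∈ 𝔹, ∀ C ∈ 𝔹, ∀ D ∈ 𝔹, μ (A ∆ D) ≤ μ (A ∆ C) + μ (C ∆ D) := by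
    intro A hA C hC D hD
    have h1 : μ (A ∆ D) ≤ μ ((A ∆ C) ∪ (C ∆ D)) :=
      hμmono _ (hsymm𝔹 A hA D hD) _ (hunion𝔹 _ (hsymm𝔹 A hA C hC) _ (hsymm𝔹 C hC D hD))
        (symmDiff_triangle A C D)
    have h2 := hμsub _ (hsymm𝔹 A hA C hC) _ (hsymm𝔹 C hC D hD)
    linarith
  have hμempty : μ ∅ = 0 := by
    refine hμnull ∅ hempty𝔹 (fun n => ?_)
    rw [hS_empty]; exact hn0 n
  -- the eight clauses
  have c1 : ∀ M : Set I01, MeasurableSet M → Φ M ∈ 𝔹 := hφ𝔹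
  have c2 : ∀ M : Set I01, MeasurableSet M → μ (Φ M) = (volI M).toReal := by
    intro M hM
    refine hμconst _ (hφ𝔹 M hM) _ (fun n => ?_)
    rw [hSφ M n]
    exact (hφn n).2.1 M hM
  have c4 : ∀ M N : Set I01, MeasurableSet M → MeasurableSet N →
      μ (Φ (M ∪ N) ∆ (Φ M ∪ Φ N)) = 0 := by
    intro M N hM hN
    refine hμnull _ (hsymm𝔹 _ (hφ𝔹 _ (hM.union hN)) _
      (hunion𝔹 _ (hφ𝔹 M hM) _ (hφ𝔹 N hN))) (fun n => ?_)
    rw [hS_symm, hS_union, hSφ, hSφ, hSφ]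
    exact (hφn n).2.2.2.1 M N hM hN
  have c5 : ∀ M N : Set I01, MeasurableSet M → MeasurableSet N →
      μ (Φ (M ∩ N) ∆ (Φ M ∩ Φ N)) = 0 := by
    intro M N hM hN
    refine hμnull _ (hsymm𝔹 _ (hφ𝔹 _ (hM.inter hN)) _
      (hinter𝔹 _ (hφ𝔹 M hM) _ (hφ𝔹 N hN))) (fun n => ?_)
    rw [hS_symm, hS_inter, hSφ, hSφ, hSφ]
    exact (hφn n).2.2.2.2.1 M N hM hN
  have c6 : ∀ M : Set I01, MeasurableSet M → μ (Φ Mᶜ ∆ (Φ M)ᶜ) = 0 := by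
    intro M hM
    refine hμnull _ (hsymm𝔹 _ (hφ𝔹 _ hM.compl) _
      (hcompl𝔹 _ (hφ𝔹 M hM))) (fun n => ?_)
    rw [hS_symm, hS_compl, hSφ, hSφ]
    exact (hφn n).2.2.2.2.2.1 M hM
  have c7 : μ (Φ univ ∆ univ) = 0 := by
    refine hμnull _ (hsymm𝔹 _ (hφ𝔹 univ MeasurableSet.univ) _ huniv𝔹) (fun n => ?_)
    rw [hS_symm, hS_univ, hSφ]
    exact (hφn n).2.2.2.2.2.2.1
  have c3 : ∀ M N : Set I01, MeasurableSet M → MeasurableSet N →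
      (volI (M ∆ N) = 0 ↔ μ (Φ M ∆ Φ N) = 0) := by
    intro M N hM hN
    have hmem : Φ M ∆ Φ N ∈ 𝔹 := hsymm𝔹 _ (hφ𝔹 M hM) _ (hφ𝔹 N hN)
    have hval : μ (Φ M ∆ Φ N) = (volI (M ∆ N)).toReal := by
      refine hμconst _ hmem _ (fun n => ?_)
      rw [hS_symm, hSφ, hSφ]
      exact hφnΔ n M N hM hN
    constructor
    · intro h0
      refine hμnull _ hmem (fun n => ?_)
      rw [hS_symm, hSφ, hSφ]
      exact ((hφn n).2.2.1 M N hM hN).mp h0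
    · intro h0
      rw [hval] at h0
      have hfin : volI (M ∆ N) ≤ 1 := by
        have hemb : MeasurableEmbedding ((↑) : I01 → ℝ) :=
          MeasurableEmbedding.subtype_coe measurableSet_Icc
        show (volume : Measure ℝ).comap Subtype.val (M ∆ N) ≤ 1
        rw [hemb.comap_apply]
        calc volume (Subtype.val '' (M ∆ N)) ≤ volume (Set.Icc (0:ℝ) 1) :=
              measure_mono (by rintro y ⟨z, _, rfl⟩; exact z.2)
          _ = 1 := by simp
      rcases (ENNReal.toReal_eq_zero_iff _).mp h0 with h | h
      · exact h
      · rw [h] at hfin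
        exact absurd hfin (by simp)
  have c8 : ∀ C ∈ 𝔹, ∃ M : Set I01, MeasurableSet M ∧ μ (Φ M ∆ C) = 0 := by
    set 𝔸 : Set (Set ℕ) :=
      {C | C ∈ 𝔹 ∧ ∃ M : Set I01, MeasurableSet M ∧ μ (Φ M ∆ C) = 0} with h𝔸def
    have hsub : 𝔹 ⊆ 𝔸 := by
      rw [h𝔹]
      apply sInter_subset_of_mem
      refine ⟨?_, ?_, ?_, ?_⟩
      · rintro C (hC | hC)
        · -- C ∈ ℱ : take M = univ
          have hC𝔹 : C ∈ 𝔹 := hℱ𝔹 hC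
          have hCc𝔹 : Cᶜ ∈ 𝔹 := hcompl𝔹 C hC𝔹
          rw [hℱ] at hC
          obtain ⟨hC1, hC2⟩ := hC
          have hC2' : Tendsto (fun n => μn n (S C n)) atTop (nhds 1) := hC2
          have hμCc : μ Cᶜ = 0 := by
            refine tendsto_nhds_unique (hμS _ hCc𝔹) ?_
            have h : (fun n => μn n (S Cᶜ n)) = fun n => 1 - μn n (S C n) := by
              funext n
              rw [hS_compl, hncomplval n _ (hSmem C hC𝔹 n)]
            rw [h]
            have hone : Tendsto (fun _ : ℕ => (1 : ℝ)) atTop (nhds 1) :=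
              tendsto_const_nhds
            simpa using hone.sub hC2'
          refine ⟨hC𝔹, univ, MeasurableSet.univ, ?_⟩
          have huC : (univ : Set ℕ) ∆ C = Cᶜ := by
            ext y
            simp [Set.mem_symmDiff]
          have h1 : μ (Φ univ ∆ C) ≤ μ (Φ univ ∆ univ) + μ (univ ∆ C) :=
            hμtri _ (hφ𝔹 univ MeasurableSet.univ) _ huniv𝔹 _ hC𝔹
          rw [c7, huC, hμCc] at h1
          have h2 := hμ0 _ (hsymm𝔹 _ (hφ𝔹 univ MeasurableSet.univ) _ hC𝔹)
          linarith
        · -- C ∈ ℱ'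
          rw [hℱ'] at hC
          obtain ⟨M, hM, rfl⟩ := hC
          refine ⟨hφ𝔹 M hM, M, hM, ?_⟩
          have h : Φ M ∆ (⋃ n, x n '' (φn n M)) = ∅ := by
            rw [show (⋃ n, x n '' (φn n M)) = Φ M from rfl]
            exact symmDiff_self (Φ M)
          rw [h]; exact hμempty
      · -- ∅
        refine ⟨hempty𝔹, ∅, MeasurableSet.empty, ?_⟩
        rw [show Φ ∅ ∆ (∅ : Set ℕ) = Φ ∅ from symmDiff_bot _]
        rw [c2 ∅ MeasurableSet.empty]
        simp
      · -- complement
        rintro C ⟨hC𝔹, M, hM, hMC⟩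
        refine ⟨hcompl𝔹 C hC𝔹, Mᶜ, hM.compl, ?_⟩
        have h1 : μ (Φ Mᶜ ∆ Cᶜ) ≤ μ (Φ Mᶜ ∆ (Φ M)ᶜ) + μ ((Φ M)ᶜ ∆ Cᶜ) :=
          hμtri _ (hφ𝔹 _ hM.compl) _ (hcompl𝔹 _ (hφ𝔹 M hM)) _ (hcompl𝔹 C hC𝔹)
        rw [c6 M hM, compl_symmDiff_compl, hMC] at h1
        have h2 := hμ0 _ (hsymm𝔹 _ (hφ𝔹 _ hM.compl) _ (hcompl𝔹 C hC𝔹))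
        linarith
      · -- union
        rintro C₁ ⟨hC₁𝔹, M₁, hM₁, hc₁⟩ C₂ ⟨hC₂𝔹, M₂, hM₂, hc₂⟩
        refine ⟨hunion𝔹 C₁ hC₁𝔹 C₂ hC₂𝔹, M₁ ∪ M₂, hM₁.union hM₂, ?_⟩
        have hmΦ12 : Φ M₁ ∪ Φ M₂ ∈ 𝔹 := hunion𝔹 _ (hφ𝔹 M₁ hM₁) _ (hφ𝔹 M₂ hM₂)
        have hmC12 : C₁ ∪ C₂ ∈ 𝔹 := hunion𝔹 C₁ hC₁𝔹 C₂ hC₂𝔹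
        have h1 : μ (Φ (M₁ ∪ M₂) ∆ (C₁ ∪ C₂)) ≤
            μ (Φ (M₁ ∪ M₂) ∆ (Φ M₁ ∪ Φ M₂)) + μ ((Φ M₁ ∪ Φ M₂) ∆ (C₁ ∪ C₂)) :=
          hμtri _ (hφ𝔹 _ (hM₁.union hM₂)) _ hmΦ12 _ hmC12
        have h2 : μ ((Φ M₁ ∪ Φ M₂) ∆ (C₁ ∪ C₂)) ≤
            μ ((Φ M₁ ∆ C₁) ∪ (Φ M₂ ∆ C₂)) :=
          hμmono _ (hsymm𝔹 _ hmΦ12 _ hmC12) _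
            (hunion𝔹 _ (hsymm𝔹 _ (hφ𝔹 M₁ hM₁) _ hC₁𝔹) _ (hsymm𝔹 _ (hφ𝔹 M₂ hM₂) _ hC₂𝔹))
            (hincU _ _ _ _)
        have h3 := hμsub _ (hsymm𝔹 _ (hφ𝔹 M₁ hM₁) _ hC₁𝔹) _ (hsymm𝔹 _ (hφ𝔹 M₂ hM₂) _ hC₂𝔹)
        rw [c4 M₁ M₂ hM₁ hM₂] at h1
        rw [hc₁, hc₂] at h3
        have h4 := hμ0 _ (hsymm𝔹 _ (hφ𝔹 _ (hM₁.union hM₂)) _ hmC12)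
        linarith
    exact fun C hC => (hsub hC).2
  exact ⟨c1, c2, c3, c4, c5, c6, c7, c8⟩
end
end
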